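/- Let K be the convex hull of the unbalanced vertices of a geodesic net in the Euclidean plane. Then every balanced vertex of the net lies in the interior of K. -/

import Mathlib

open scoped Classical

/-- A geodesic net in the Euclidean plane: a finite connected graph embedded in `ℝ²`
whose edges are straight segments between distinct vertices, such that no vertex lies
in the interior of an edge and the interiors of distinct edges are disjoint. -/
structure GeodesicNet where
  verts : Finset (EuclideanSpace ℝ (Fin 2))
  Adj : EuclideanSpace ℝ (Fin 2) → EuclideanSpace ℝ (Fin 2) → Prop
  symm : ∀ u v, Adj u v → Adj v u
  loopless : ∀ v, ¬Adj v v
  mem_of_adj : ∀ u v, Adj u v → u ∈ verts ∧ v ∈ verts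
  nonempty : verts.Nonempty
  connected : ∀ u ∈ verts, ∀ v ∈ verts, Relation.ReflTransGen Adj u v
  no_vertex_inside : ∀ u v, Adj u v → ∀ w ∈ verts, w ∉ openSegment ℝ u v
  edges_disjoint : ∀ u v x y, Adj u v → Adj x y →
    ({u, v} : Set (EuclideanSpace ℝ (Fin 2))) ≠ {x, y} →
    openSegment ℝ u v ∩ openSegment ℝ x y = ∅

namespace GeodesicNet

variable (G : GeodesicNet)

/-- The neighbours of a vertex, as a finset. -/
noncomputable def nbhd (v : EuclideanSpace ℝ (Fin 2)) : Finset (EuclideanSpace ℝ (Fin 2)) :=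
  G.verts.filter fun u => G.Adj v u

/-- The unit vector at `v` pointing towards `u`. -/
noncomputable def dir (_G : GeodesicNet) (v u : EuclideanSpace ℝ (Fin 2)) : EuclideanSpace ℝ (Fin 2) :=
  ‖u - v‖⁻¹ • (u - v)

/-- A vertex is balanced if it has degree at least `3` and the unit vectors along the
incident edges (directed away from the vertex) sum to zero. -/
noncomputable def Balanced (v : EuclideanSpace ℝ (Fin 2)) : Prop :=
  v ∈ G.verts ∧ 3 ≤ (G.nbhd v).card ∧ ∑ u ∈ G.nbhd v, G.dir v u = 0

/-- A vertex is unbalanced if it is a vertex of the net and is not balanced. -/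
noncomputable def Unbalanced (v : EuclideanSpace ℝ (Fin 2)) : Prop :=
  v ∈ G.verts ∧ ¬G.Balanced v

end GeodesicNet

local notation "E2" => EuclideanSpace ℝ (Fin 2)

/-- A balanced vertex cannot maximize a nonzero linear functional over its neighbours. -/
private lemma aux_no_balanced_max (G : GeodesicNet) (f : E2 →L[ℝ] ℝ) (hf : f ≠ 0)
    (w : E2) (hw : G.Balanced w) (hmax : ∀ u ∈ G.nbhd w, f u ≤ f w) : False := by
  obtain ⟨hwV, hcard, hsum⟩ := hw
  have hadj : ∀ u ∈ G.nbhd w, G.Adj w u ∧ u ∈ G.verts := by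
    intro u hu
    rw [GeodesicNet.nbhd, Finset.mem_filter] at hu
    exact ⟨hu.2, hu.1⟩
  have hne : ∀ u ∈ G.nbhd w, u ≠ w := by
    intro u hu h
    exact G.loopless w (h ▸ (hadj u hu).1)
  -- each direction vector is killed by f
  have hdir0 : ∀ u ∈ G.nbhd w, f (G.dir w u) = 0 := by
    have hnonpos : ∀ u ∈ G.nbhd w, f (G.dir w u) ≤ 0 := by
      intro u hu
      have h1 : f (u - w) ≤ 0 := by
        have := hmax u hu
        rw [map_sub]; linarith
      rw [GeodesicNet.dir, map_smul, smul_eq_mul]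
      exact mul_nonpos_of_nonneg_of_nonpos (inv_nonneg.2 (norm_nonneg _)) h1
    have hzero : ∑ u ∈ G.nbhd w, f (G.dir w u) = 0 := by
      rw [← map_sum, hsum, map_zero]
    intro u hu
    exact (Finset.sum_eq_zero_iff_of_nonpos hnonpos).1 hzero u hu
  have hker : ∀ u ∈ G.nbhd w, f (u - w) = 0 := by
    intro u hu
    have h1 := hdir0 u hu
    rw [GeodesicNet.dir, map_smul, smul_eq_mul] at h1
    have hn : ‖u - w‖ ≠ 0 := by
      simp only [norm_ne_zero_iff, sub_ne_zero]
      exact hne u hu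
    rcases mul_eq_zero.1 h1 with h | h
    · exact absurd (inv_eq_zero.1 h) hn
    · exact h
  -- the kernel of f is one-dimensional
  have hrank : Module.finrank ℝ (LinearMap.ker (f : E2 →ₗ[ℝ] ℝ)) = 1 := by
    obtain ⟨x, hx⟩ : ∃ x, f x ≠ 0 := by
      by_contra h
      push_neg at h
      exact hf (ContinuousLinearMap.ext fun x => by simp [h x])
    have hsurj : LinearMap.range (f : E2 →ₗ[ℝ] ℝ) = ⊤ := by
      rw [LinearMap.range_eq_top]
      intro c
      refine ⟨(c / f x) • x, ?_⟩
      simp only [LinearMap.map_smul, smul_eq_mul]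
      show c / f x * f x = c
      field_simp
    have hsum2 := LinearMap.finrank_range_add_finrank_ker (f : E2 →ₗ[ℝ] ℝ)
    rw [hsurj, finrank_top, finrank_euclideanSpace_fin] at hsum2
    have : Module.finrank ℝ ℝ = 1 := Module.finrank_self ℝ
    have hkk : LinearMap.ker (f : E2 →ₗ[ℝ] ℝ) = LinearMap.ker (f : E2 →ₗ[ℝ] ℝ) := rfl
    rw [hkk, this] at hsum2
    omega
  -- so all neighbours lie on a line through `w`
  obtain ⟨e, he0, hspan⟩ := (finrank_eq_one_iff' ).1 hrank
  have hline : ∀ u ∈ G.nbhd w, ∃ t : ℝ, t ≠ 0 ∧ u - w = t • (e : E2) := by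
    intro u hu
    have hm : u - w ∈ LinearMap.ker (f : E2 →ₗ[ℝ] ℝ) := LinearMap.mem_ker.2 (hker u hu)
    obtain ⟨t, ht⟩ := hspan ⟨u - w, hm⟩
    have ht' : u - w = t • (e : E2) := by
      have := congrArg (Subtype.val) ht
      simpa using this.symm
    refine ⟨t, ?_, ht'⟩
    intro h0
    rw [h0, zero_smul, sub_eq_zero] at ht'
    exact hne u hu ht'
  have hline' : ∀ u : E2, ∃ t : ℝ, u ∈ G.nbhd w → (t ≠ 0 ∧ u - w = t • (e : E2)) := by
    intro u
    by_cases hu : u ∈ G.nbhd w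
    · obtain ⟨t, h1, h2⟩ := hline u hu
      exact ⟨t, fun _ => ⟨h1, h2⟩⟩
    · exact ⟨1, fun h => absurd h hu⟩
  choose t ht using hline'
  -- two neighbours on the same side of `w` contradict `no_vertex_inside`
  have hseg : ∀ u₁ ∈ G.nbhd w, ∀ u₂ ∈ G.nbhd w,
      0 < t u₁ / t u₂ → t u₁ / t u₂ < 1 → False := by
    intro u₁ h₁ u₂ h₂ hpos hlt
    obtain ⟨ht₁, he₁⟩ := ht u₁ h₁
    obtain ⟨ht₂, he₂⟩ := ht u₂ h₂
    set t₁ := t u₁ with ht₁def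
    set t₂ := t u₂ with ht₂def
    apply G.no_vertex_inside w u₂ (hadj u₂ h₂).1 u₁ (hadj u₁ h₁).2
    refine ⟨1 - t₁ / t₂, t₁ / t₂, by linarith, hpos, by ring, ?_⟩
    have hu₂ : u₂ = w + t₂ • (e : E2) := by rw [← he₂]; abel
    have hu₁ : u₁ = w + t₁ • (e : E2) := by rw [← he₁]; abel
    rw [hu₂, hu₁]
    have hs : t₁ / t₂ * t₂ = t₁ := div_mul_cancel₀ _ ht₂
    rw [smul_add, smul_smul, hs, sub_smul, one_smul]
    abel
  -- hence at most one neighbour on each side: degree ≤ 2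
  have hcard2 : (G.nbhd w).card ≤ 2 := by
    have hmapsto : ∀ u ∈ G.nbhd w, (decide (0 < t u)) ∈ (Finset.univ : Finset Bool) :=
      fun u _ => Finset.mem_univ _
    have hinj : Set.InjOn (fun u => decide (0 < t u)) (G.nbhd w) := by
      intro u₁ h₁ u₂ h₂ heq
      simp only [decide_eq_decide] at heq
      by_contra hne12
      obtain ⟨ht₁, he₁⟩ := ht u₁ h₁
      obtain ⟨ht₂, he₂⟩ := ht u₂ h₂
      have htne : t u₁ ≠ t u₂ := by
        intro h
        apply hne12
        have : u₁ - w = u₂ - w := by rw [he₁, he₂, h]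
        exact sub_left_injective this
      by_cases hp : 0 < t u₁
      · have hp₂ : 0 < t u₂ := heq.1 hp
        rcases lt_or_gt_of_ne htne with hlt | hgt
        · exact hseg u₁ h₁ u₂ h₂ (div_pos hp hp₂) (div_lt_one_iff.2 (Or.inl ⟨hp₂, hlt⟩))
        · exact hseg u₂ h₂ u₁ h₁ (div_pos hp₂ hp) (div_lt_one_iff.2 (Or.inl ⟨hp, hgt⟩))
      · have hp₂ : ¬ 0 < t u₂ := fun h => hp (heq.2 h)
        have hn₁ : t u₁ < 0 := lt_of_le_of_ne (not_lt.1 hp) ht₁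
        have hn₂ : t u₂ < 0 := lt_of_le_of_ne (not_lt.1 hp₂) ht₂
        rcases lt_or_gt_of_ne htne with hlt | hgt
        · exact hseg u₂ h₂ u₁ h₁ (div_pos_iff.2 (Or.inr ⟨hn₂, hn₁⟩))
            (div_lt_one_iff.2 (Or.inr (Or.inr ⟨hn₁, hlt⟩)))
        · exact hseg u₁ h₁ u₂ h₂ (div_pos_iff.2 (Or.inr ⟨hn₁, hn₂⟩))
            (div_lt_one_iff.2 (Or.inr (Or.inr ⟨hn₂, hgt⟩)))
    calc (G.nbhd w).card ≤ (Finset.univ : Finset Bool).card :=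
          Finset.card_le_card_of_injOn _ hmapsto hinj
      _ = 2 := by simp
  omega

/-- Separation of a point from a convex set not containing it in its interior. -/
private lemma aux_sep (C : Set E2) (hC : Convex ℝ C) (v : E2) (hvC : v ∉ interior C) :
    ∃ f : E2 →L[ℝ] ℝ, f ≠ 0 ∧ ∀ x ∈ C, f x ≤ f v := by
  by_cases hi : (interior C).Nonempty
  · obtain ⟨f, hfsep⟩ := geometric_hahn_banach_open_point hC.interior isOpen_interior hvC
    obtain ⟨a0, ha0⟩ := hi
    refine ⟨f, ?_, ?_⟩
    · intro h
      rw [h] at hfsep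
      simpa using hfsep a0 ha0
    · intro x hx
      have key : ∀ θ : ℝ, θ ∈ Set.Ioo (0:ℝ) 1 → (1 - θ) * f a0 + θ * f x < f v := by
        intro θ hθ
        have hmem : (1 - θ) • a0 + θ • x ∈ interior C :=
          hC.combo_interior_self_mem_interior ha0 hx (by linarith [hθ.2]) hθ.1.le
            (by ring)
        have := hfsep _ hmem
        simpa [map_add, map_smul, smul_eq_mul] using this
      have htend : Filter.Tendsto (fun θ : ℝ => (1 - θ) * f a0 + θ * f x)
          (nhdsWithin 1 (Set.Iio 1)) (nhds (f x)) := by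
        have hc : Continuous (fun θ : ℝ => (1 - θ) * f a0 + θ * f x) := by fun_prop
        have := hc.tendsto 1
        simp only [sub_self, zero_mul, one_mul, zero_add] at this
        exact this.mono_left nhdsWithin_le_nhds
      refine le_of_tendsto htend ?_
      filter_upwards [Ioo_mem_nhdsLT_of_mem (Set.mem_Ioc.2 ⟨zero_lt_one, le_refl 1⟩)]
        with θ hθ
      exact (key θ hθ).le
  · rw [Set.not_nonempty_iff_eq_empty] at hi
    by_cases hCne : C.Nonempty
    · have hspan : affineSpan ℝ C ≠ ⊤ := by
        intro h
        rw [← hC.interior_nonempty_iff_affineSpan_eq_top, hi] at h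
        exact Set.not_nonempty_empty h
      obtain ⟨p, hp⟩ := hCne
      have hCspan : (affineSpan ℝ C : Set E2).Nonempty := ⟨p, subset_affineSpan ℝ C hp⟩
      have hdirne : (affineSpan ℝ C).direction ≠ ⊤ := by
        intro h
        exact hspan ((AffineSubspace.direction_eq_top_iff_of_nonempty hCspan).1 h)
      obtain ⟨a, haorth, ha0⟩ : ∃ a, a ∈ (affineSpan ℝ C).directionᗮ ∧ a ≠ 0 := by
        by_contra h
        push_neg at h
        apply hdirne
        rw [← Submodule.orthogonal_eq_bot_iff]
        ext x
        simp only [Submodule.mem_bot]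
        exact ⟨fun hx => h x hx, fun hx => hx ▸ Submodule.zero_mem _⟩
      have hconst : ∀ x ∈ C, (innerSL ℝ a) x = (innerSL ℝ a) p := by
        intro x hx
        have hmem : x - p ∈ (affineSpan ℝ C).direction := by
          have := AffineSubspace.vsub_mem_direction (subset_affineSpan ℝ C hx)
            (subset_affineSpan ℝ C hp)
          simpa using this
        have h0 : inner ℝ a (x - p) = (0 : ℝ) :=
          (Submodule.mem_orthogonal' _ a).1 haorth _ hmem
        have : inner ℝ a x - inner ℝ a p = (0 : ℝ) := by
          rw [← inner_sub_right]; exact h0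
        simp only [innerSL_apply_apply]
        show inner ℝ a x = inner ℝ a p
        linarith
      have hinner : (innerSL ℝ a) a ≠ 0 := by
        simp only [innerSL_apply_apply]
        show inner ℝ a a ≠ (0 : ℝ)
        exact inner_self_ne_zero.2 ha0
      rcases le_total ((innerSL ℝ a) p) ((innerSL ℝ a) v) with h | h
      · refine ⟨innerSL ℝ a, ?_, fun x hx => by rw [hconst x hx]; exact h⟩
        intro hh
        apply hinner
        rw [hh]; rfl
      · refine ⟨-innerSL ℝ a, ?_, fun x hx => ?_⟩
        · intro hh
          apply hinner
          have := congrArg (fun F : E2 →L[ℝ] ℝ => F a) hh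
          simp only [ContinuousLinearMap.neg_apply, ContinuousLinearMap.zero_apply] at this
          linarith [this]
        · simp only [ContinuousLinearMap.neg_apply]
          rw [hconst x hx]
          linarith
    · rw [Set.not_nonempty_iff_eq_empty] at hCne
      refine ⟨innerSL ℝ (EuclideanSpace.single 0 1), ?_, by simp [hCne]⟩
      intro hh
      have := congrArg (fun F : E2 →L[ℝ] ℝ => F (EuclideanSpace.single 0 1)) hh
      simp only [innerSL_apply_apply, ContinuousLinearMap.zero_apply] at this
      rw [EuclideanSpace.inner_single_left] at this
      simp at this

theorem balanced_mem_interior_convexHull_unbalanced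
    (G : GeodesicNet) (v : EuclideanSpace ℝ (Fin 2)) (hv : G.Balanced v) :
    v ∈ interior (convexHull ℝ {u | G.Unbalanced u}) := by
  by_contra hvint
  obtain ⟨f, hf0, hfle⟩ := aux_sep _ (convex_convexHull ℝ _) v hvint
  obtain ⟨w, hwV, hwmax⟩ := G.verts.exists_max_image (fun x => f x) G.nonempty
  have hnbhd_sub : ∀ z u, u ∈ G.nbhd z → u ∈ G.verts := by
    intro z u hu
    rw [GeodesicNet.nbhd, Finset.mem_filter] at hu
    exact hu.1
  by_cases hb : G.Balanced w
  · exact aux_no_balanced_max G f hf0 w hb fun u hu => hwmax u (hnbhd_sub w u hu)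
  · have hwU : w ∈ {u | G.Unbalanced u} := ⟨hwV, hb⟩
    have h1 : f w ≤ f v := hfle w (subset_convexHull ℝ _ hwU)
    exact aux_no_balanced_max G f hf0 v hv
      fun u hu => le_trans (hwmax u (hnbhd_sub v u hu)) h1
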